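/- arXiv:math/0102074 — 2 statements merged into one kernel-verified Lean document; each statement's English description precedes it below -/
import Mathlib

section
/- Graded Leibniz rule for the deformed differential algebra: let d : Ω → Ω be an R-linear map preserving the (n₁,n₂)-bidegree and raising form degree by one, i.e. d maps Ω_{(k,n₁,n₂)} into Ω_{(k+1,n₁,n₂)}, which satisfies the graded Leibniz rule d(ω·ρ) = d(ω)·ρ + (-1)^k ω·d(ρ) for ω of form degree k. Then d satisfies the graded Leibniz rule for the deformed product: for homogeneous ω ∈ Ω_{(k,p₁,p₂)} and ρ ∈ Ω_{(l,q₁,q₂)}, d(ω ⋆ ρ) = d(ω) ⋆ ρ + (-1)^k ω ⋆ d(ρ). Hence the deformed complex Ω_λ with the undeformed d is a differential graded algebra. -/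
/-- **Graded Leibniz rule for the deformed differential algebra.**
`Ω` is an `R`-algebra graded by `ℤ × ℤ × ℤ` (form degree `k` together with a bidegree
`(n₁, n₂)`), and `d : Ω → Ω` is an `R`-linear map sending `Ω (k, n₁, n₂)` into
`Ω (k + 1, n₁, n₂)` and satisfying the graded Leibniz rule
`d (ω * ρ) = d ω * ρ + (-1) ^ k • (ω * d ρ)` for `ω` of form degree `k`.
For homogeneous `ω ∈ Ω (k, p₁, p₂)` and `ρ ∈ Ω (m, q₁, q₂)` the deformed product is
`ω ⋆ ρ = l ^ (p₁ * q₂) • (ω * ρ)`; then `d (ω ⋆ ρ) = d ω ⋆ ρ + (-1) ^ k • (ω ⋆ d ρ)`,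
so the deformed complex with the undeformed `d` is a differential graded algebra. -/
theorem deformed_graded_leibniz {R Ω : Type*} [CommRing R] [Ring Ω] [Algebra R Ω]
    (𝒜 : ℤ × ℤ × ℤ → Submodule R Ω) [SetLike.GradedMonoid 𝒜]
    (l : Rˣ) (d : Ω →ₗ[R] Ω)
    (hd_deg : ∀ (u : ℤ × ℤ × ℤ) (ω : Ω), ω ∈ 𝒜 u → d ω ∈ 𝒜 (u.1 + 1, u.2))
    (hd_leibniz : ∀ (k : ℤ) (n : ℤ × ℤ) (ω : Ω), ω ∈ 𝒜 (k, n) →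
      ∀ ρ : Ω, d (ω * ρ) = d ω * ρ + ((-1 : ℤˣ) ^ k) • (ω * d ρ))
    (k m : ℤ) (p q : ℤ × ℤ) (ω ρ : Ω)
    (hω : ω ∈ 𝒜 (k, p)) (hρ : ρ ∈ 𝒜 (m, q)) :
    d ((l ^ (p.1 * q.2)) • (ω * ρ)) =
      (l ^ (p.1 * q.2)) • (d ω * ρ) +
        ((-1 : ℤˣ) ^ k) • ((l ^ (p.1 * q.2)) • (ω * d ρ)) := by
  rw [Units.smul_def, map_smul, hd_leibniz k p ω hω ρ, smul_add, smul_comm]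
  rfl
end

section
/- Twisted antipode: let Ψ = Σ Ψ₍₁₎ ⊗ Ψ₍₂₎ be an invertible element of H ⊗ H satisfying the cocycle condition Ψ₁₂ · ((Δ ⊗ id)(Ψ)) = Ψ₂₃ · ((id ⊗ Δ)(Ψ)) and the counit normalization (ε ⊗ id)(Ψ) = 1 = (id ⊗ ε)(Ψ). Set U := Σ Ψ₍₁₎ · S(Ψ₍₂₎) ∈ H, assume U is invertible, and define S_Ψ(t) := U · S(t) · U⁻¹ and Δ_Ψ(t) := Ψ · Δ(t) · Ψ⁻¹. Then S_Ψ is an antipode for the twisted bialgebra: m ∘ (S_Ψ ⊗ id) ∘ Δ_Ψ = η ∘ ε = m ∘ (id ⊗ S_Ψ) ∘ Δ_Ψ, where m is the multiplication of H and η : R → H the unit map. -/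
open TensorProduct

set_option synthInstance.maxHeartbeats 1000000
set_option maxHeartbeats 1000000

/-- The twisted comultiplication `Δ_Ψ t = Ψ * Δ t * Ψ⁻¹` of a bialgebra `H` by an
(invertible) element `Ψ` of `H ⊗ H` (with chosen inverse `Ψinv`), as a linear map. -/
noncomputable def twistedComul {R H : Type*} [CommRing R] [Ring H] [Bialgebra R H]
    (Ψ Ψinv : H ⊗[R] H) : H →ₗ[R] H ⊗[R] H :=
  (LinearMap.mulRight R Ψinv) ∘ₗ (LinearMap.mulLeft R Ψ) ∘ₗ Coalgebra.comul

/-- The element `U = Σ Ψ₍₁₎ * S (Ψ₍₂₎)` of a Hopf algebra `H` associated with a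
twist `Ψ ∈ H ⊗ H`, i.e. `m ∘ (id ⊗ S)` applied to `Ψ`. -/
noncomputable def twistU {R H : Type*} [CommRing R] [Ring H] [HopfAlgebra R H]
    (Ψ : H ⊗[R] H) : H :=
  LinearMap.mul' R H ((HopfAlgebra.antipode (R := R)).lTensor H Ψ)

/-- The twisted antipode `S_Ψ t = U * S t * U⁻¹` (with chosen inverse `Uinv` of `U`),
as a linear map. -/
noncomputable def twistedAntipode {R H : Type*} [CommRing R] [Ring H] [HopfAlgebra R H]
    (U Uinv : H) : H →ₗ[R] H :=
  (LinearMap.mulRight R Uinv) ∘ₗ (LinearMap.mulLeft R U) ∘ₗ HopfAlgebra.antipode (R := R)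


section TwistAux

variable (R H : Type*) [CommRing R] [Ring H] [HopfAlgebra R H]

/-- The antipode, abbreviated. -/
noncomputable def sa : H →ₗ[R] H := HopfAlgebra.antipode (R := R)

variable {R H}

/-- `fv w (x ⊗ y) = x * w * S y`. -/
noncomputable def fv (w : H) : H ⊗[R] H →ₗ[R] H :=
  LinearMap.mul' R H ∘ₗ TensorProduct.map LinearMap.id (LinearMap.mulLeft R w ∘ₗ sa R H)

/-- `gv v (x ⊗ y) = S x * v * y`. -/
noncomputable def gv (v : H) : H ⊗[R] H →ₗ[R] H :=
  LinearMap.mul' R H ∘ₗ TensorProduct.map (LinearMap.mulRight R v ∘ₗ sa R H) LinearMap.id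

@[simp] lemma fv_tmul (w x y : H) : fv w (x ⊗ₜ[R] y) = x * (w * sa R H y) := by
  simp [fv]

@[simp] lemma gv_tmul (v x y : H) : gv v (x ⊗ₜ[R] y) = sa R H x * v * y := by
  simp [gv]

lemma sa_one : sa R H 1 = 1 := by
  have h := HopfAlgebra.mul_antipode_rTensor_comul_apply (R := R) (a := (1 : H))
  rw [Bialgebra.comul_one, Algebra.TensorProduct.one_def] at h
  simpa [sa] using h

lemma fv_comul (t : H) : fv 1 (Coalgebra.comul (R := R) t) = algebraMap R H (Coalgebra.counit t) := by
  have h := HopfAlgebra.mul_antipode_lTensor_comul_apply (R := R) (a := t)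
  have e : (fv (1 : H) : H ⊗[R] H →ₗ[R] H)
      = LinearMap.mul' R H ∘ₗ LinearMap.lTensor H (sa R H) := by
    rw [fv, LinearMap.mulLeft_one, LinearMap.id_comp]; rfl
  rw [e]; exact h

lemma gv_comul (t : H) : gv 1 (Coalgebra.comul (R := R) t) = algebraMap R H (Coalgebra.counit t) := by
  have h := HopfAlgebra.mul_antipode_rTensor_comul_apply (R := R) (a := t)
  have e : (gv (1 : H) : H ⊗[R] H →ₗ[R] H)
      = LinearMap.mul' R H ∘ₗ LinearMap.rTensor H (sa R H) := by
    rw [gv, LinearMap.mulRight_one, LinearMap.id_comp]; rfl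
  rw [e]; exact h

lemma fv_smul (r : R) (w : H) (M : H ⊗[R] H) : fv (r • w) M = r • fv w M := by
  induction M using TensorProduct.induction_on with
  | zero => simp
  | tmul x y => simp [mul_smul_comm, smul_mul_assoc]
  | add a b ha hb => simp [ha, hb]

lemma gv_smul (r : R) (v : H) (M : H ⊗[R] H) : gv (r • v) M = r • gv v M := by
  induction M using TensorProduct.induction_on with
  | zero => simp
  | tmul x y => simp [mul_smul_comm, smul_mul_assoc]
  | add a b ha hb => simp [ha, hb]

lemma fv_one_one (w : H) : fv w (1 : H ⊗[R] H) = w := by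
  rw [Algebra.TensorProduct.one_def]
  simp [sa_one]

lemma gv_one_one (v : H) : gv v (1 : H ⊗[R] H) = v := by
  rw [Algebra.TensorProduct.one_def]
  simp [sa_one]


section AntipodeMul

open Coalgebra

local notation "C" => H ⊗[R] H

/-- The comultiplication on `H ⊗ H`. -/
noncomputable def comulC : (H ⊗[R] H) →ₗ[R] (H ⊗[R] H) ⊗[R] (H ⊗[R] H) :=
  (TensorProduct.tensorTensorTensorComm R H H H H).toLinearMap ∘ₗ
    TensorProduct.map Coalgebra.comul Coalgebra.comul

lemma comulC_tmul (a b : H) :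
    comulC (a ⊗ₜ[R] b) =
      TensorProduct.tensorTensorTensorComm R H H H H (comul a ⊗ₜ[R] comul b) := by
  simp [comulC]

/-- The counit on `H ⊗ H`, postcomposed with the unit of `H`. -/
noncomputable def eC : (H ⊗[R] H) →ₗ[R] H :=
  Algebra.linearMap R H ∘ₗ LinearMap.mul' R R ∘ₗ
    TensorProduct.map Coalgebra.counit Coalgebra.counit

lemma eC_tmul (a b : H) : eC (a ⊗ₜ[R] b) = algebraMap R H (counit a * counit b) := by
  simp [eC]

/-- Convolution product on linear maps `H ⊗ H →ₗ H`. -/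
noncomputable def conv (f g : (H ⊗[R] H) →ₗ[R] H) : (H ⊗[R] H) →ₗ[R] H :=
  LinearMap.mul' R H ∘ₗ TensorProduct.map f g ∘ₗ comulC

lemma mulmul (x y : C) :
    TensorProduct.map (LinearMap.mul' R H) (LinearMap.mul' R H)
      (TensorProduct.tensorTensorTensorComm R H H H H (x ⊗ₜ[R] y)) = x * y := by
  induction x using TensorProduct.induction_on with
  | zero => simp
  | tmul p q =>
    induction y using TensorProduct.induction_on with
    | zero => simp
    | tmul r s => simp [Algebra.TensorProduct.tmul_mul_tmul]
    | add y1 y2 h1 h2 => simp only [tmul_add, map_add, h1, h2, mul_add]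
  | add x1 x2 h1 h2 => simp only [add_tmul, map_add, h1, h2, add_mul]

lemma comulC_mul_elt (a b : H) :
    TensorProduct.map (LinearMap.mul' R H) (LinearMap.mul' R H) (comulC (a ⊗ₜ[R] b)) =
      comul (R := R) (a * b) := by
  rw [comulC_tmul, mulmul, Bialgebra.comul_mul]

lemma bridge1 (f : (H ⊗[R] H) →ₗ[R] H) (u v : C) :
    LinearMap.mul' R H (TensorProduct.map eC f
        (TensorProduct.tensorTensorTensorComm R H H H H (u ⊗ₜ[R] v))) =
      f ((TensorProduct.lid R H ((Coalgebra.counit (R := R)).rTensor H u)) ⊗ₜ[R]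
         (TensorProduct.lid R H ((Coalgebra.counit (R := R)).rTensor H v))) := by
  induction u using TensorProduct.induction_on with
  | zero => simp
  | tmul x y =>
    induction v using TensorProduct.induction_on with
    | zero => simp
    | tmul z w =>
      simp only [tensorTensorTensorComm_tmul, map_tmul, LinearMap.mul'_apply, eC_tmul,
        LinearMap.rTensor_tmul, lid_tmul]
      rw [← Algebra.smul_def, ← smul_tmul', tmul_smul]
      simp [smul_smul]
    | add v1 v2 h1 h2 => simp only [tmul_add, add_tmul, map_add, h1, h2]
  | add u1 u2 h1 h2 => simp only [tmul_add, add_tmul, map_add, h1, h2]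

lemma bridge2 (f : (H ⊗[R] H) →ₗ[R] H) (u v : C) :
    LinearMap.mul' R H (TensorProduct.map f eC
        (TensorProduct.tensorTensorTensorComm R H H H H (u ⊗ₜ[R] v))) =
      f ((TensorProduct.rid R H ((Coalgebra.counit (R := R)).lTensor H u)) ⊗ₜ[R]
         (TensorProduct.rid R H ((Coalgebra.counit (R := R)).lTensor H v))) := by
  induction u using TensorProduct.induction_on with
  | zero => simp
  | tmul x y =>
    induction v using TensorProduct.induction_on with
    | zero => simp
    | tmul z w =>
      simp only [tensorTensorTensorComm_tmul, map_tmul, LinearMap.mul'_apply, eC_tmul,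
        LinearMap.lTensor_tmul, rid_tmul]
      rw [← Algebra.commutes, ← Algebra.smul_def, ← smul_tmul', tmul_smul]
      simp [smul_smul]
    | add v1 v2 h1 h2 => simp only [tmul_add, add_tmul, map_add, h1, h2]
  | add u1 u2 h1 h2 => simp only [tmul_add, add_tmul, map_add, h1, h2]

lemma conv_eC_left (f : (H ⊗[R] H) →ₗ[R] H) : conv eC f = f := by
  apply TensorProduct.ext'
  intro a b
  have : conv eC f (a ⊗ₜ[R] b) = LinearMap.mul' R H
      (TensorProduct.map eC f (comulC (a ⊗ₜ[R] b))) := rfl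
  rw [this, comulC_tmul, bridge1]
  simp

lemma conv_eC_right (f : (H ⊗[R] H) →ₗ[R] H) : conv f eC = f := by
  apply TensorProduct.ext'
  intro a b
  have : conv f eC (a ⊗ₜ[R] b) = LinearMap.mul' R H
      (TensorProduct.map f eC (comulC (a ⊗ₜ[R] b))) := rfl
  rw [this, comulC_tmul, bridge2]
  simp


lemma P1elt (w : (H ⊗[R] H) ⊗[R] H) :
    LinearMap.mul' R H ((LinearMap.mul' R H).rTensor H w) =
      LinearMap.mul' R H ((LinearMap.mul' R H).lTensor H (TensorProduct.assoc R H H H w)) := by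
  induction w using TensorProduct.induction_on with
  | zero => simp only [zero_tmul, tmul_zero, map_zero, smul_zero, mul_zero, zero_mul, fv_tmul]
  | tmul u z =>
    induction u using TensorProduct.induction_on with
    | zero => simp only [zero_tmul, tmul_zero, map_zero, smul_zero, mul_zero, zero_mul, fv_tmul]
    | tmul x y => simp [mul_assoc]
    | add a b ha hb => simp only [add_tmul, map_add, ha, hb]
  | add a b ha hb => simp only [map_add, ha, hb]

lemma P2elt (f g h : (H ⊗[R] H) →ₗ[R] H)
    (w : ((H ⊗[R] H) ⊗[R] (H ⊗[R] H)) ⊗[R] (H ⊗[R] H)) :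
    TensorProduct.assoc R H H H (TensorProduct.map (TensorProduct.map f g) h w) =
      TensorProduct.map f (TensorProduct.map g h)
        (TensorProduct.assoc R (H ⊗[R] H) (H ⊗[R] H) (H ⊗[R] H) w) := by
  induction w using TensorProduct.induction_on with
  | zero => simp only [zero_tmul, tmul_zero, map_zero, smul_zero, mul_zero, zero_mul, fv_tmul]
  | tmul u z =>
    induction u using TensorProduct.induction_on with
    | zero => simp only [zero_tmul, tmul_zero, map_zero, smul_zero, mul_zero, zero_mul, fv_tmul]
    | tmul x y => simp
    | add a b ha hb => simp only [add_tmul, map_add, ha, hb]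
  | add a b ha hb => simp only [map_add, ha, hb]

lemma step1 (u v : H ⊗[R] H) :
    comulC.rTensor (H ⊗[R] H) (TensorProduct.tensorTensorTensorComm R H H H H (u ⊗ₜ[R] v)) =
      (TensorProduct.tensorTensorTensorComm R H H H H).toLinearMap.rTensor (H ⊗[R] H)
        (TensorProduct.tensorTensorTensorComm R (H ⊗[R] H) H (H ⊗[R] H) H
          (((Coalgebra.comul (R := R)).rTensor H u) ⊗ₜ[R]
            ((Coalgebra.comul (R := R)).rTensor H v))) := by
  induction u using TensorProduct.induction_on with
  | zero => simp only [zero_tmul, tmul_zero, map_zero, smul_zero, mul_zero, zero_mul, fv_tmul]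
  | tmul x y =>
    induction v using TensorProduct.induction_on with
    | zero => simp only [zero_tmul, tmul_zero, map_zero, smul_zero, mul_zero, zero_mul, fv_tmul]
    | tmul z w =>
      simp only [tensorTensorTensorComm_tmul, LinearMap.rTensor_tmul, comulC_tmul]
      rfl
    | add a b ha hb => simp only [tmul_add, add_tmul, map_add, ha, hb]
  | add a b ha hb => simp only [tmul_add, add_tmul, map_add, ha, hb]

lemma step2 (u v : H ⊗[R] H) :
    comulC.lTensor (H ⊗[R] H) (TensorProduct.tensorTensorTensorComm R H H H H (u ⊗ₜ[R] v)) =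
      (TensorProduct.tensorTensorTensorComm R H H H H).toLinearMap.lTensor (H ⊗[R] H)
        (TensorProduct.tensorTensorTensorComm R H (H ⊗[R] H) H (H ⊗[R] H)
          (((Coalgebra.comul (R := R)).lTensor H u) ⊗ₜ[R]
            ((Coalgebra.comul (R := R)).lTensor H v))) := by
  induction u using TensorProduct.induction_on with
  | zero => simp only [zero_tmul, tmul_zero, map_zero, smul_zero, mul_zero, zero_mul, fv_tmul]
  | tmul x y =>
    induction v using TensorProduct.induction_on with
    | zero => simp only [zero_tmul, tmul_zero, map_zero, smul_zero, mul_zero, zero_mul, fv_tmul]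
    | tmul z w =>
      simp only [tensorTensorTensorComm_tmul, LinearMap.lTensor_tmul, comulC_tmul]
      rfl
    | add a b ha hb => simp only [tmul_add, add_tmul, map_add, ha, hb]
  | add a b ha hb => simp only [tmul_add, add_tmul, map_add, ha, hb]

lemma step4 (p q : H ⊗[R] (H ⊗[R] H)) :
    TensorProduct.assoc R (H ⊗[R] H) (H ⊗[R] H) (H ⊗[R] H)
      ((TensorProduct.tensorTensorTensorComm R H H H H).toLinearMap.rTensor (H ⊗[R] H)
        (TensorProduct.tensorTensorTensorComm R (H ⊗[R] H) H (H ⊗[R] H) H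
          (((TensorProduct.assoc R H H H).symm p) ⊗ₜ[R]
            ((TensorProduct.assoc R H H H).symm q)))) =
      (TensorProduct.tensorTensorTensorComm R H H H H).toLinearMap.lTensor (H ⊗[R] H)
        (TensorProduct.tensorTensorTensorComm R H (H ⊗[R] H) H (H ⊗[R] H) (p ⊗ₜ[R] q)) := by
  induction p using TensorProduct.induction_on with
  | zero => simp only [zero_tmul, tmul_zero, map_zero, smul_zero, mul_zero, zero_mul, fv_tmul]
  | tmul x m =>
    induction q using TensorProduct.induction_on with
    | zero => simp only [zero_tmul, tmul_zero, map_zero, smul_zero, mul_zero, zero_mul, fv_tmul]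
    | tmul z n =>
      induction m using TensorProduct.induction_on with
      | zero => simp only [zero_tmul, tmul_zero, map_zero, smul_zero, mul_zero, zero_mul, fv_tmul]
      | tmul y y' =>
        induction n using TensorProduct.induction_on with
        | zero => simp only [zero_tmul, tmul_zero, map_zero, smul_zero, mul_zero, zero_mul, fv_tmul]
        | tmul w w' => simp
        | add a b ha hb => simp only [tmul_add, add_tmul, map_add, ha, hb]
      | add a b ha hb => simp only [tmul_add, add_tmul, map_add, ha, hb]
    | add a b ha hb => simp only [tmul_add, add_tmul, map_add, ha, hb]
  | add a b ha hb => simp only [tmul_add, add_tmul, map_add, ha, hb]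

lemma coassocC (x : H ⊗[R] H) :
    TensorProduct.assoc R (H ⊗[R] H) (H ⊗[R] H) (H ⊗[R] H)
        (comulC.rTensor (H ⊗[R] H) (comulC x)) =
      comulC.lTensor (H ⊗[R] H) (comulC x) := by
  induction x using TensorProduct.induction_on with
  | zero => simp only [zero_tmul, tmul_zero, map_zero, smul_zero, mul_zero, zero_mul, fv_tmul]
  | tmul a b =>
    rw [comulC_tmul, step1, step2, ← Coalgebra.coassoc_symm_apply (R := R) (a := a),
      ← Coalgebra.coassoc_symm_apply (R := R) (a := b), step4]
  | add a b ha hb => simp only [map_add, ha, hb]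

lemma aux1 (f g h : (H ⊗[R] H) →ₗ[R] H) (y : (H ⊗[R] H) ⊗[R] (H ⊗[R] H)) :
    LinearMap.mul' R H (TensorProduct.map (conv f g) h y) =
      LinearMap.mul' R H ((LinearMap.mul' R H).rTensor H
        (TensorProduct.map (TensorProduct.map f g) h (comulC.rTensor (H ⊗[R] H) y))) := by
  induction y using TensorProduct.induction_on with
  | zero => simp only [zero_tmul, tmul_zero, map_zero, smul_zero, mul_zero, zero_mul, fv_tmul]
  | tmul c d => simp [conv]
  | add a b ha hb => simp only [map_add, ha, hb]

lemma aux2 (f g h : (H ⊗[R] H) →ₗ[R] H) (y : (H ⊗[R] H) ⊗[R] (H ⊗[R] H)) :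
    LinearMap.mul' R H (TensorProduct.map f (conv g h) y) =
      LinearMap.mul' R H ((LinearMap.mul' R H).lTensor H
        (TensorProduct.map f (TensorProduct.map g h) (comulC.lTensor (H ⊗[R] H) y))) := by
  induction y using TensorProduct.induction_on with
  | zero => simp only [zero_tmul, tmul_zero, map_zero, smul_zero, mul_zero, zero_mul, fv_tmul]
  | tmul c d => simp [conv]
  | add a b ha hb => simp only [map_add, ha, hb]

lemma conv_assoc (f g h : (H ⊗[R] H) →ₗ[R] H) :
    conv (conv f g) h = conv f (conv g h) := by
  apply LinearMap.ext; intro x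
  have l1 : conv (conv f g) h x =
      LinearMap.mul' R H (TensorProduct.map (conv f g) h (comulC x)) := rfl
  have l2 : conv f (conv g h) x =
      LinearMap.mul' R H (TensorProduct.map f (conv g h) (comulC x)) := rfl
  rw [l1, l2, aux1, aux2, P1elt, P2elt, coassocC]

/-- `S ∘ m`. -/
noncomputable def f0 : (H ⊗[R] H) →ₗ[R] H := sa R H ∘ₗ LinearMap.mul' R H

/-- `m ∘ (S ⊗ S) ∘ swap`. -/
noncomputable def h0 : (H ⊗[R] H) →ₗ[R] H :=
  LinearMap.mul' R H ∘ₗ TensorProduct.map (sa R H) (sa R H) ∘ₗ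
    (TensorProduct.comm R H H).toLinearMap

@[simp] lemma h0_tmul (a b : H) : h0 (a ⊗ₜ[R] b) = sa R H b * sa R H a := by simp [h0]

lemma conv_f0_mul : conv f0 (LinearMap.mul' R H) = eC := by
  apply TensorProduct.ext'
  intro a b
  have l1 : conv f0 (LinearMap.mul' R H) (a ⊗ₜ[R] b) =
      LinearMap.mul' R H (TensorProduct.map f0 (LinearMap.mul' R H) (comulC (a ⊗ₜ[R] b))) := rfl
  have l2 : TensorProduct.map f0 (LinearMap.mul' R H) =
      TensorProduct.map (sa R H) LinearMap.id ∘ₗ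
        TensorProduct.map (LinearMap.mul' R H) (LinearMap.mul' R H) := by
    rw [← TensorProduct.map_comp]
    rfl
  rw [l1, l2, LinearMap.comp_apply, comulC_mul_elt]
  have l3 : TensorProduct.map (sa R H) (LinearMap.id (R := R) (M := H)) =
      (HopfAlgebra.antipode (R := R)).rTensor H := rfl
  rw [l3, HopfAlgebra.mul_antipode_rTensor_comul_apply, Bialgebra.counit_mul, eC_tmul]

lemma bridge3 (u v : H ⊗[R] H) :
    LinearMap.mul' R H (TensorProduct.map (LinearMap.mul' R H) h0
        (TensorProduct.tensorTensorTensorComm R H H H H (u ⊗ₜ[R] v))) =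
      fv (fv 1 v) u := by
  induction u using TensorProduct.induction_on with
  | zero => simp only [zero_tmul, tmul_zero, map_zero, smul_zero, mul_zero, zero_mul, fv_tmul]
  | tmul x y =>
    induction v using TensorProduct.induction_on with
    | zero => simp only [zero_tmul, tmul_zero, map_zero, smul_zero, mul_zero, zero_mul, fv_tmul]
    | tmul z w => simp [mul_assoc]
    | add a b ha hb => simp only [tmul_add, add_tmul, map_add, ha, hb, fv_tmul, add_mul, mul_add]
  | add a b ha hb => simp only [tmul_add, add_tmul, map_add, ha, hb]

lemma conv_mul_h0 : conv (LinearMap.mul' R H) h0 = eC := by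
  apply TensorProduct.ext'
  intro a b
  have l1 : conv (LinearMap.mul' R H) h0 (a ⊗ₜ[R] b) =
      LinearMap.mul' R H (TensorProduct.map (LinearMap.mul' R H) h0 (comulC (a ⊗ₜ[R] b))) := rfl
  rw [l1, comulC_tmul, bridge3, fv_comul, Algebra.algebraMap_eq_smul_one, fv_smul,
    fv_comul, eC_tmul, Algebra.smul_def, ← map_mul, mul_comm]

theorem sa_mul (a b : H) : sa R H (a * b) = sa R H b * sa R H a := by
  have hf : (f0 : (H ⊗[R] H) →ₗ[R] H) = h0 := by
    calc (f0 : (H ⊗[R] H) →ₗ[R] H)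
        = conv f0 eC := (conv_eC_right f0).symm
      _ = conv f0 (conv (LinearMap.mul' R H) h0) := by rw [conv_mul_h0]
      _ = conv (conv f0 (LinearMap.mul' R H)) h0 := (conv_assoc _ _ _).symm
      _ = conv eC h0 := by rw [conv_f0_mul]
      _ = h0 := conv_eC_left h0
  have := LinearMap.congr_fun hf (a ⊗ₜ[R] b)
  simpa [f0] using this

end AntipodeMul


lemma gv_mul (v : H) (A B : H ⊗[R] H) : gv v (A * B) = gv (gv v A) B := by
  induction B using TensorProduct.induction_on with
  | zero => simp
  | tmul x y =>
    induction A using TensorProduct.induction_on with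
    | zero => simp
    | tmul p q =>
      simp only [Algebra.TensorProduct.tmul_mul_tmul, gv_tmul, sa_mul, mul_assoc]
    | add a b ha hb => simp only [add_mul, map_add, ha, hb, gv_tmul, mul_add]
  | add a b ha hb => simp only [mul_add, map_add, ha, hb]

lemma fv_mul (w : H) (A B : H ⊗[R] H) : fv w (A * B) = fv (fv w B) A := by
  induction A using TensorProduct.induction_on with
  | zero => simp
  | tmul x y =>
    induction B using TensorProduct.induction_on with
    | zero => simp
    | tmul p q =>
      simp only [Algebra.TensorProduct.tmul_mul_tmul, fv_tmul, sa_mul, mul_assoc]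
    | add a b ha hb => simp only [mul_add, map_add, ha, hb, fv_tmul, mul_add, add_mul]
  | add a b ha hb => simp only [add_mul, map_add, ha, hb]

/-- `ε ⊗ id` contracted. -/
noncomputable def eLmap : H ⊗[R] H →ₗ[R] H :=
  (TensorProduct.lid R H).toLinearMap ∘ₗ
    TensorProduct.map (Coalgebra.counit (R := R)) LinearMap.id

/-- `id ⊗ ε` contracted. -/
noncomputable def eRmap : H ⊗[R] H →ₗ[R] H :=
  (TensorProduct.rid R H).toLinearMap ∘ₗ
    TensorProduct.map LinearMap.id (Coalgebra.counit (R := R))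

@[simp] lemma eLmap_tmul (a b : H) :
    eLmap (a ⊗ₜ[R] b) = Coalgebra.counit (R := R) a • b := by simp [eLmap]

@[simp] lemma eRmap_tmul (a b : H) :
    eRmap (a ⊗ₜ[R] b) = Coalgebra.counit (R := R) b • a := by simp [eRmap]

lemma eLmap_mul (A B : H ⊗[R] H) : eLmap (A * B) = eLmap A * eLmap B := by
  induction A using TensorProduct.induction_on with
  | zero => simp
  | tmul p q =>
    induction B using TensorProduct.induction_on with
    | zero => simp
    | tmul x y =>
      simp only [Algebra.TensorProduct.tmul_mul_tmul, eLmap_tmul, Bialgebra.counit_mul]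
      rw [smul_mul_assoc, mul_smul_comm, smul_smul]
    | add a b ha hb => simp only [mul_add, map_add, ha, hb]
  | add a b ha hb => simp only [add_mul, map_add, ha, hb]

lemma eLmap_one : eLmap (1 : H ⊗[R] H) = 1 := by
  rw [Algebra.TensorProduct.one_def]; simp

/-- `Σ x * S(y₁) * w * y₂`? No: `theta (x ⊗ (y ⊗ z)) = x * (S y * 1 * z)`. -/
noncomputable def theta : H ⊗[R] (H ⊗[R] H) →ₗ[R] H :=
  LinearMap.mul' R H ∘ₗ (gv (1 : H)).lTensor H

@[simp] lemma theta_tmul (x : H) (M : H ⊗[R] H) : theta (x ⊗ₜ[R] M) = x * gv 1 M := by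
  simp [theta]

lemma central_shuffle (r s : R) (x q : H) :
    x * algebraMap R H r * algebraMap R H s * q = (s • x) * (r • q) := by
  calc x * algebraMap R H r * algebraMap R H s * q
      = x * (algebraMap R H r * algebraMap R H s) * q := by rw [mul_assoc x]
    _ = x * (algebraMap R H s * algebraMap R H r) * q := by
        rw [← map_mul, mul_comm r s, map_mul]
    _ = x * algebraMap R H s * algebraMap R H r * q := by rw [← mul_assoc x]
    _ = algebraMap R H s * x * algebraMap R H r * q := by rw [← Algebra.commutes s x]
    _ = (s • x) * (r • q) := by
        rw [Algebra.smul_def, Algebra.smul_def, mul_assoc (algebraMap R H s * x)]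

lemma thetaCA (F G : H ⊗[R] H) :
    theta (((1 : H) ⊗ₜ[R] G) * (Algebra.TensorProduct.assoc R R R H H H (F ⊗ₜ[R] (1 : H)))) =
      fv 1 F * gv 1 G := by
  induction F using TensorProduct.induction_on with
  | zero => simp
  | tmul x y =>
    induction G using TensorProduct.induction_on with
    | zero => simp
    | tmul p q =>
      simp only [Algebra.TensorProduct.assoc_tmul, Algebra.TensorProduct.tmul_mul_tmul,
        theta_tmul, gv_tmul, fv_tmul, one_mul, mul_one, sa_mul, mul_assoc]
    | add a b ha hb =>
      simp only [tmul_add, add_mul, mul_add, map_add, ha, hb, gv_tmul]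
  | add a b ha hb =>
    simp only [add_tmul, map_add, mul_add, add_mul, ha, hb, fv_tmul]

lemma thetaInner (x q : H) (c d : H ⊗[R] H) :
    theta ((x ⊗ₜ[R] d) * (Algebra.TensorProduct.assoc R R R H H H (c ⊗ₜ[R] q))) =
      x * fv 1 c * gv 1 d * q := by
  induction c using TensorProduct.induction_on with
  | zero => simp
  | tmul c1 c2 =>
    induction d using TensorProduct.induction_on with
    | zero => simp
    | tmul d1 d2 =>
      simp only [Algebra.TensorProduct.assoc_tmul, Algebra.TensorProduct.tmul_mul_tmul,
        theta_tmul, gv_tmul, fv_tmul, one_mul, mul_one, sa_mul, mul_assoc]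
    | add a b ha hb =>
      simp only [tmul_add, add_tmul, add_mul, mul_add, map_add, ha, hb, gv_tmul]
  | add a b ha hb =>
    simp only [tmul_add, add_tmul, add_mul, mul_add, map_add, ha, hb, fv_tmul]

lemma thetaDB (F G : H ⊗[R] H) :
    theta (((Algebra.TensorProduct.map (AlgHom.id R H) (Bialgebra.comulAlgHom R H)) F) *
        (Algebra.TensorProduct.assoc R R R H H H
          ((Algebra.TensorProduct.map (Bialgebra.comulAlgHom R H) (AlgHom.id R H)) G))) =
      eRmap F * eLmap G := by
  induction F using TensorProduct.induction_on with
  | zero => simp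
  | tmul x s =>
    induction G using TensorProduct.induction_on with
    | zero => simp
    | tmul p q =>
      rw [Algebra.TensorProduct.map_tmul, Algebra.TensorProduct.map_tmul]
      simp only [AlgHom.coe_id, id_eq, Bialgebra.comulAlgHom_apply]
      rw [thetaInner, fv_comul, gv_comul, central_shuffle, eRmap_tmul, eLmap_tmul]
    | add a b ha hb =>
      simp only [map_add, tmul_add, add_tmul, mul_add, add_mul, ha, hb, eLmap_tmul]
  | add a b ha hb =>
    simp only [map_add, tmul_add, add_tmul, mul_add, add_mul, ha, hb, eRmap_tmul]

end TwistAux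


section Forms

variable {R H : Type*} [CommRing R] [Ring H] [HopfAlgebra R H]

lemma leftForm (u' v' : H) (M : H ⊗[R] H) :
    LinearMap.mul' R H (TensorProduct.map (twistedAntipode u' v') LinearMap.id M) =
      u' * gv v' M := by
  induction M using TensorProduct.induction_on with
  | zero => simp
  | tmul x y => simp [twistedAntipode, sa, mul_assoc]
  | add a b ha hb => simp only [map_add, ha, hb, mul_add]

lemma rightForm (u' v' : H) (M : H ⊗[R] H) :
    LinearMap.mul' R H (TensorProduct.map LinearMap.id (twistedAntipode u' v') M) =
      fv u' M * v' := by
  induction M using TensorProduct.induction_on with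
  | zero => simp
  | tmul x y => simp [twistedAntipode, sa, mul_assoc]
  | add a b ha hb => simp only [map_add, ha, hb, add_mul]

end Forms

/-- **The twisted antipode is an antipode for the twisted bialgebra.**
Let `Ψ` be an invertible element of `H ⊗ H` satisfying the cocycle condition
`Ψ₁₂ * ((Δ ⊗ id) Ψ) = Ψ₂₃ * ((id ⊗ Δ) Ψ)` and the counit normalization
`(ε ⊗ id) Ψ = 1 = (id ⊗ ε) Ψ`.  Set `U := Σ Ψ₍₁₎ * S (Ψ₍₂₎)`, assume `U` is
invertible, and define `S_Ψ t := U * S t * U⁻¹` and `Δ_Ψ t := Ψ * Δ t * Ψ⁻¹`.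
Then `m ∘ (S_Ψ ⊗ id) ∘ Δ_Ψ = η ∘ ε = m ∘ (id ⊗ S_Ψ) ∘ Δ_Ψ`. -/
theorem twistedAntipode_is_antipode {R H : Type*} [CommRing R] [Ring H] [HopfAlgebra R H]
    (Ψ Ψinv : H ⊗[R] H)
    (hΨ : Ψ * Ψinv = 1) (hΨ' : Ψinv * Ψ = 1)
    (hcocycle :
      (Algebra.TensorProduct.assoc R R R H H H) (Ψ ⊗ₜ[R] (1 : H)) *
          (Algebra.TensorProduct.assoc R R R H H H)
            ((Algebra.TensorProduct.map (Bialgebra.comulAlgHom R H) (AlgHom.id R H)) Ψ) =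
        ((1 : H) ⊗ₜ[R] Ψ) *
          (Algebra.TensorProduct.map (AlgHom.id R H) (Bialgebra.comulAlgHom R H)) Ψ)
    (hcounit_left :
      (TensorProduct.lid R H)
        ((TensorProduct.map (Coalgebra.counit (R := R) (A := H)) LinearMap.id) Ψ) = 1)
    (hcounit_right :
      (TensorProduct.rid R H)
        ((TensorProduct.map LinearMap.id (Coalgebra.counit (R := R) (A := H))) Ψ) = 1)
    (Uinv : H)
    (hU : twistU Ψ * Uinv = 1) (hU' : Uinv * twistU Ψ = 1) :
    ∀ t : H,
      LinearMap.mul' R H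
          ((TensorProduct.map (twistedAntipode (twistU Ψ) Uinv) LinearMap.id)
            (twistedComul Ψ Ψinv t)) =
        algebraMap R H (Coalgebra.counit t) ∧
      LinearMap.mul' R H
          ((TensorProduct.map LinearMap.id (twistedAntipode (twistU Ψ) Uinv))
            (twistedComul Ψ Ψinv t)) =
        algebraMap R H (Coalgebra.counit t) := by
  intro t
  classical
  -- abbreviations
  have fv1eq : (fv (1 : H) : H ⊗[R] H →ₗ[R] H) =
      LinearMap.mul' R H ∘ₗ (HopfAlgebra.antipode (R := R)).lTensor H := by
    rw [fv, LinearMap.mulLeft_one, LinearMap.id_comp]; rfl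
  have hufv : twistU Ψ = fv 1 Ψ := by rw [twistU, fv1eq]; rfl
  have hR : eRmap Ψ = 1 := hcounit_right
  have hL1 : eLmap Ψ = 1 := hcounit_left
  have hL : eLmap Ψinv = 1 := by
    calc eLmap Ψinv = eLmap Ψ * eLmap Ψinv := by rw [hL1, one_mul]
      _ = eLmap (Ψ * Ψinv) := (eLmap_mul _ _).symm
      _ = 1 := by rw [hΨ, eLmap_one]
  have hBB' : (Algebra.TensorProduct.assoc R R R H H H)
        ((Algebra.TensorProduct.map (Bialgebra.comulAlgHom R H) (AlgHom.id R H)) Ψ) *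
      (Algebra.TensorProduct.assoc R R R H H H)
        ((Algebra.TensorProduct.map (Bialgebra.comulAlgHom R H) (AlgHom.id R H)) Ψinv) = 1 := by
    rw [← map_mul, ← map_mul, hΨ, map_one, map_one]
  have hC'C : ((1 : H) ⊗ₜ[R] Ψinv) * ((1 : H) ⊗ₜ[R] Ψ) = 1 := by
    rw [Algebra.TensorProduct.tmul_mul_tmul, one_mul, hΨ', ← Algebra.TensorProduct.one_def]
  have key : ((1 : H) ⊗ₜ[R] Ψinv) * (Algebra.TensorProduct.assoc R R R H H H (Ψ ⊗ₜ[R] (1 : H))) =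
      ((Algebra.TensorProduct.map (AlgHom.id R H) (Bialgebra.comulAlgHom R H)) Ψ) *
        (Algebra.TensorProduct.assoc R R R H H H
          ((Algebra.TensorProduct.map (Bialgebra.comulAlgHom R H) (AlgHom.id R H)) Ψinv)) := by
    calc ((1 : H) ⊗ₜ[R] Ψinv) * (Algebra.TensorProduct.assoc R R R H H H (Ψ ⊗ₜ[R] (1 : H)))
        = ((1 : H) ⊗ₜ[R] Ψinv) * (Algebra.TensorProduct.assoc R R R H H H (Ψ ⊗ₜ[R] (1 : H))) *
          ((Algebra.TensorProduct.assoc R R R H H H)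
              ((Algebra.TensorProduct.map (Bialgebra.comulAlgHom R H) (AlgHom.id R H)) Ψ) *
            (Algebra.TensorProduct.assoc R R R H H H)
              ((Algebra.TensorProduct.map (Bialgebra.comulAlgHom R H) (AlgHom.id R H)) Ψinv)) := by
          rw [hBB', mul_one]
      _ = ((1 : H) ⊗ₜ[R] Ψinv) *
            ((Algebra.TensorProduct.assoc R R R H H H (Ψ ⊗ₜ[R] (1 : H))) *
              (Algebra.TensorProduct.assoc R R R H H H)
                ((Algebra.TensorProduct.map (Bialgebra.comulAlgHom R H) (AlgHom.id R H)) Ψ)) *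
            (Algebra.TensorProduct.assoc R R R H H H)
              ((Algebra.TensorProduct.map (Bialgebra.comulAlgHom R H) (AlgHom.id R H)) Ψinv) := by
          rw [← mul_assoc, mul_assoc (((1 : H) ⊗ₜ[R] Ψinv))]
      _ = ((1 : H) ⊗ₜ[R] Ψinv) *
            (((1 : H) ⊗ₜ[R] Ψ) *
              (Algebra.TensorProduct.map (AlgHom.id R H) (Bialgebra.comulAlgHom R H)) Ψ) *
            (Algebra.TensorProduct.assoc R R R H H H)
              ((Algebra.TensorProduct.map (Bialgebra.comulAlgHom R H) (AlgHom.id R H)) Ψinv) := by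
          rw [hcocycle]
      _ = (((1 : H) ⊗ₜ[R] Ψinv) * ((1 : H) ⊗ₜ[R] Ψ)) *
            ((Algebra.TensorProduct.map (AlgHom.id R H) (Bialgebra.comulAlgHom R H)) Ψ *
              (Algebra.TensorProduct.assoc R R R H H H)
                ((Algebra.TensorProduct.map (Bialgebra.comulAlgHom R H) (AlgHom.id R H)) Ψinv)) := by
          rw [← mul_assoc, ← mul_assoc]
      _ = _ := by rw [hC'C, one_mul]
  have huv : twistU Ψ * gv 1 Ψinv = 1 := by
    rw [hufv]
    calc fv 1 Ψ * gv 1 Ψinv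
        = theta (((1 : H) ⊗ₜ[R] Ψinv) *
            (Algebra.TensorProduct.assoc R R R H H H (Ψ ⊗ₜ[R] (1 : H)))) := (thetaCA Ψ Ψinv).symm
      _ = eRmap Ψ * eLmap Ψinv := by rw [key, thetaDB]
      _ = 1 := by rw [hR, hL, one_mul]
  have hUv : Uinv = gv 1 Ψinv := by
    calc Uinv = Uinv * (twistU Ψ * gv 1 Ψinv) := by rw [huv, mul_one]
      _ = (Uinv * twistU Ψ) * gv 1 Ψinv := by rw [mul_assoc]
      _ = gv 1 Ψinv := by rw [hU', one_mul]
  have hcm : twistedComul Ψ Ψinv t = Ψ * Coalgebra.comul t * Ψinv := rfl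
  have hgvΨ : gv (gv 1 Ψinv) Ψ = 1 := by
    rw [← gv_mul, hΨ', gv_one_one]
  have hfvΨinv : fv (twistU Ψ) Ψinv = 1 := by
    rw [hufv, ← fv_mul, hΨ', fv_one_one]
  constructor
  · rw [leftForm, hcm, hUv, gv_mul, gv_mul, hgvΨ, gv_comul,
      Algebra.algebraMap_eq_smul_one, gv_smul, mul_smul_comm, huv]
  · rw [rightForm, hcm, hUv, fv_mul, hfvΨinv, fv_mul, fv_comul,
      Algebra.algebraMap_eq_smul_one, fv_smul, ← hufv, smul_mul_assoc, huv]
end
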